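/- arXiv:1403.3758 — 2 statements merged into one kernel-verified Lean document; each statement's English description precedes it below -/
import Mathlib

section
/- The Benjamini–Hochberg procedure controls the false discovery rate: if $p_{(1)} \le \dots \le p_{(m)}$ are ordered p-values of $m$ independent hypotheses of which $m_0$ are true nulls (each true null p-value uniformly distributed on $[0,1]$), and one rejects all hypotheses with $p_{(i)} \le (i/m)\alpha$ for $i \le k$ where $k = \max\{i : p_{(i)} \le (i/m)\alpha\}$, then the expected proportion of false rejections among all rejections is at most $(m_0/m)\alpha \le \alpha$. -/
open MeasureTheory ProbabilityTheory Finset in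
private lemma bh_sup_filter_eq (s : Finset ℕ) (P : ℕ → Prop) [DecidablePred P] :
    (s.filter P).sup id = s.sup (fun j => if P j then j else 0) := by
  apply le_antisymm
  · apply Finset.sup_le
    intro j hj
    rw [Finset.mem_filter] at hj
    have := Finset.le_sup (f := fun j => if P j then j else 0) hj.1
    simpa [hj.2] using this
  · apply Finset.sup_le
    intro j hj
    split
    · exact Finset.le_sup (f := id) (Finset.mem_filter.2 ⟨hj, ‹_›⟩)
    · exact Nat.zero_le _

private lemma bh_measurable_finset_sup {Ω : Type*} [MeasurableSpace Ω] (s : Finset ℕ)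
    (f : ℕ → Ω → ℕ) (hf : ∀ j, Measurable (f j)) :
    Measurable (fun ω => s.sup (fun j => f j ω)) := by
  classical
  induction s using Finset.induction with
  | empty => simp only [Finset.sup_empty]; exact measurable_const
  | insert _ _ _ ih => simp only [Finset.sup_insert]; exact (hf _).max ih

private lemma bh_sup_id_mem (s : Finset ℕ) (h : s.Nonempty) : s.sup id ∈ s := by
  obtain ⟨b, hb, heq⟩ := Finset.exists_mem_eq_sup s h id
  rw [heq]; exact hb

open MeasureTheory ProbabilityTheory Finset in
open scoped Classical in
/-- The Benjamini–Hochberg step-up procedure controls the false discovery rate: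
with `m` independent p-values, `m0` of which correspond to true nulls and are
uniform on `[0,1]`, rejecting all hypotheses with `p i ≤ (k/m)α` where `k` is the
largest `j` such that at least `j` p-values are `≤ (j/m)α` (equivalently, the largest
`j` with `p_(j) ≤ (j/m)α` for the ordered p-values), the expected proportion of
false rejections among all rejections is at most `(m0/m)α ≤ α`. -/
theorem benjamini_hochberg_fdr_control
    {Ω : Type*} [MeasureSpace Ω] (μP : Measure Ω) [IsProbabilityMeasure μP]
    (m m0 : ℕ) (hm : 0 < m) (hm0 : m0 ≤ m)
    (α : ℝ) (hα0 : 0 ≤ α) (hα1 : α ≤ 1)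
    (p : Fin m → Ω → ℝ) (hmeas : ∀ i, Measurable (p i))
    (hindep : iIndepFun p μP)
    (trueNulls : Finset (Fin m)) (hcard : trueNulls.card = m0)
    (hunif : ∀ i ∈ trueNulls,
      μP.map (p i) = (volume : Measure ℝ).restrict (Set.Icc 0 1))
    (kBH : Ω → ℕ)
    (hk : ∀ ω, kBH ω = ((Finset.range (m + 1)).filter (fun j : ℕ =>
        j ≤ ((Finset.univ.filter (fun i => p i ω ≤ (j : ℝ) * α / m)).card))).sup id)
    (R : Ω → Finset (Fin m))
    (hR : ∀ ω, R ω = Finset.univ.filter (fun i => p i ω ≤ (kBH ω : ℝ) * α / m))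
    (FDP : Ω → ℝ)
    (hFDP : ∀ ω, FDP ω = ((R ω ∩ trueNulls).card : ℝ) / max ((R ω).card : ℝ) 1) :
    (∫ ω, FDP ω ∂μP) ≤ (m0 : ℝ) / m * α ∧ (m0 : ℝ) / m * α ≤ α := by
  have hm' : (0:ℝ) < m := by exact_mod_cast hm
  -- threshold function
  set t : ℕ → ℝ := fun j => (j : ℝ) * α / m with ht_def
  have ht0 : ∀ j, 0 ≤ t j := fun j => by positivity
  have htmono : ∀ {j j' : ℕ}, j ≤ j' → t j ≤ t j' := by
    intro j j' h
    have hc : (j:ℝ) ≤ (j':ℝ) := by exact_mod_cast h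
    have := mul_le_mul_of_nonneg_right hc hα0
    exact div_le_div_of_nonneg_right this hm'.le
  have ht_le_one : ∀ {j : ℕ}, j ≤ m → t j ≤ 1 := by
    intro j hj
    rw [div_le_one hm']
    calc (j:ℝ) * α ≤ (m:ℝ) * 1 :=
      mul_le_mul (by exact_mod_cast hj) hα1 hα0 (by positivity)
    _ = m := mul_one _
  -- counting function
  set cnt : ℕ → Ω → ℕ := fun j ω => (Finset.univ.filter (fun i => p i ω ≤ t j)).card
    with hcnt_def
  have hk' : ∀ ω, kBH ω =
      ((Finset.range (m + 1)).filter (fun j : ℕ => j ≤ cnt j ω)).sup id := hk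
  have hcnt_mono : ∀ (ω) {j j' : ℕ}, j ≤ j' → cnt j ω ≤ cnt j' ω := by
    intro ω j j' h
    apply Finset.card_le_card
    apply Finset.monotone_filter_right
    intro i _ hi
    exact le_trans hi (htmono h)
  have hcnt_le : ∀ ω j, cnt j ω ≤ m := by
    intro ω j
    calc cnt j ω ≤ Finset.univ.card := Finset.card_le_card (Finset.filter_subset _ _)
    _ = m := by simp
  have hkBH_le : ∀ ω, kBH ω ≤ m := by
    intro ω
    rw [hk']
    apply Finset.sup_le
    intro j hj
    rw [Finset.mem_filter, Finset.mem_range] at hj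
    simp only [id_eq]
    omega
  have hkBH_feas : ∀ ω, kBH ω ≤ cnt (kBH ω) ω := by
    intro ω
    have hne : ((Finset.range (m + 1)).filter (fun j : ℕ => j ≤ cnt j ω)).Nonempty :=
      ⟨0, Finset.mem_filter.2 ⟨Finset.mem_range.2 (by omega), Nat.zero_le _⟩⟩
    have := bh_sup_id_mem _ hne
    rw [← hk'] at this
    exact (Finset.mem_filter.1 this).2
  have hkBH_max : ∀ (ω) {j : ℕ}, j ≤ m → j ≤ cnt j ω → j ≤ kBH ω := by
    intro ω j hj1 hj2
    rw [hk']
    exact Finset.le_sup (f := id)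
      (Finset.mem_filter.2 ⟨Finset.mem_range.2 (by omega), hj2⟩)
  have hcardR : ∀ ω, (R ω).card = kBH ω := by
    intro ω
    have h1 : (R ω).card = cnt (kBH ω) ω := by rw [hR]
    refine le_antisymm ?_ (h1 ▸ hkBH_feas ω)
    rw [h1]
    apply hkBH_max ω (hcnt_le ω _)
    exact hcnt_mono ω (hkBH_feas ω)
  -- leave-one-out quantities
  set cnt' : Fin m → ℕ → Ω → ℕ := fun i j ω =>
    (Finset.univ.filter (fun l => (if l = i then (0:ℝ) else p l ω) ≤ t j)).card with hcnt'_def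
  set ki : Fin m → Ω → ℕ := fun i ω =>
    ((Finset.range (m + 1)).filter (fun j => j ≤ cnt' i j ω)).sup id with hki_def
  set gi : Fin m → Ω → ℕ := fun i ω => max (ki i ω) 1 with hgi_def
  have hcnt'_eq : ∀ i j ω,
      cnt' i j ω = (insert i (Finset.univ.filter (fun l => p l ω ≤ t j))).card := by
    intro i j ω
    apply congrArg Finset.card
    ext l
    simp only [hcnt'_def, Finset.mem_filter, Finset.mem_insert, Finset.mem_univ, true_and]
    by_cases hli : l = i
    · simp [hli, ht0 j]
    · simp [hli]
  have hcnt_le_cnt' : ∀ i j ω, cnt j ω ≤ cnt' i j ω := by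
    intro i j ω
    rw [hcnt'_eq]
    exact Finset.card_le_card (Finset.subset_insert _ _)
  have hcnt'_of_le : ∀ i j ω, p i ω ≤ t j → cnt' i j ω = cnt j ω := by
    intro i j ω hle
    rw [hcnt'_eq]
    congr 1
    exact Finset.insert_eq_self.2 (Finset.mem_filter.2 ⟨Finset.mem_univ _, hle⟩)
  have hki_ge : ∀ i ω, kBH ω ≤ ki i ω := by
    intro i ω
    rw [hk']
    apply Finset.sup_mono
    apply Finset.monotone_filter_right
    intro j _ hj
    exact le_trans hj (hcnt_le_cnt' i j ω)
  have hki_le : ∀ i ω, ki i ω ≤ m := by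
    intro i ω
    apply Finset.sup_le
    intro j hj
    rw [Finset.mem_filter, Finset.mem_range] at hj
    simp only [id_eq]
    omega
  have hki_feas : ∀ i ω, ki i ω ≤ cnt' i (ki i ω) ω := by
    intro i ω
    have hne : ((Finset.range (m + 1)).filter (fun j : ℕ => j ≤ cnt' i j ω)).Nonempty :=
      ⟨0, Finset.mem_filter.2 ⟨Finset.mem_range.2 (by omega), Nat.zero_le _⟩⟩
    have hmem := bh_sup_id_mem _ hne
    exact (Finset.mem_filter.1 hmem).2
  have hki_eq : ∀ i ω, p i ω ≤ t (kBH ω) → ki i ω = kBH ω := by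
    intro i ω hle
    refine le_antisymm ?_ (hki_ge i ω)
    have h2 : p i ω ≤ t (ki i ω) := le_trans hle (htmono (hki_ge i ω))
    have h3 : cnt' i (ki i ω) ω = cnt (ki i ω) ω := hcnt'_of_le _ _ _ h2
    exact hkBH_max ω (hki_le i ω) (h3 ▸ hki_feas i ω)
  -- the dominating simple function
  set hfun : Fin m → ℕ → Ω → ℝ := fun i k ω =>
    if (gi i ω = k ∧ p i ω ≤ t k) then (1:ℝ)/k else 0 with hh_def
  have hfun_nonneg : ∀ i k ω, 0 ≤ hfun i k ω := by
    intro i k ω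
    simp only [hh_def]
    split
    · positivity
    · exact le_rfl
  set G : Ω → ℝ := fun ω => ∑ i ∈ trueNulls, ∑ k ∈ Finset.Icc 1 m, hfun i k ω with hG_def
  have hpt : ∀ ω, FDP ω ≤ G ω := by
    intro ω
    rw [hFDP, hG_def]
    have hnum : ((R ω ∩ trueNulls).card : ℝ)
        = ∑ i ∈ trueNulls, (if i ∈ R ω then (1:ℝ) else 0) := by
      rw [show R ω ∩ trueNulls = trueNulls.filter (fun i => i ∈ R ω) by
        ext l; simp [Finset.mem_inter, Finset.mem_filter, and_comm]]
      rw [Finset.card_filter]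
      push_cast
      rfl
    rw [hnum, Finset.sum_div]
    apply Finset.sum_le_sum
    intro i hi
    by_cases hiR : i ∈ R ω
    · have hpi : p i ω ≤ t (kBH ω) := by
        rw [hR] at hiR
        exact (Finset.mem_filter.1 hiR).2
      have hkig : ki i ω = kBH ω := hki_eq i ω hpi
      have hg_eq : gi i ω = max (kBH ω) 1 := by simp only [hgi_def, hkig]
      have hg_mem : gi i ω ∈ Finset.Icc 1 m := by
        rw [Finset.mem_Icc, hg_eq]
        exact ⟨le_max_right _ _, max_le (hkBH_le ω) hm⟩
      have hkg : kBH ω ≤ gi i ω := hg_eq ▸ le_max_left _ _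
      have hterm : hfun i (gi i ω) ω = 1 / (gi i ω : ℝ) := by
        rw [hh_def]
        exact if_pos ⟨rfl, le_trans hpi (htmono hkg)⟩
      have hD : max (((R ω).card : ℕ) : ℝ) 1 = ((gi i ω : ℕ) : ℝ) := by
        rw [hcardR ω, hg_eq]
        push_cast [Nat.cast_max]
        rfl
      calc (if i ∈ R ω then (1:ℝ) else 0) / max (((R ω).card : ℕ) : ℝ) 1
          = 1 / ((gi i ω : ℕ) : ℝ) := by rw [if_pos hiR, hD]
        _ = hfun i (gi i ω) ω := hterm.symm
        _ ≤ ∑ k ∈ Finset.Icc 1 m, hfun i k ω :=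
            Finset.single_le_sum (fun k _ => hfun_nonneg i k ω) hg_mem
    · rw [if_neg hiR, zero_div]
      exact Finset.sum_nonneg fun k _ => hfun_nonneg i k ω
  -- measurability
  have hcnt_meas : ∀ j, Measurable (cnt j) := by
    intro j
    have heq : cnt j = fun ω => ∑ l : Fin m, (if p l ω ≤ t j then 1 else 0) := by
      funext ω
      simp only [hcnt_def]
      rw [Finset.card_filter]
    rw [heq]
    apply Finset.measurable_sum
    intro l _
    refine Measurable.ite ?_ measurable_const measurable_const
    exact measurableSet_le (hmeas l) measurable_const
  have hkBH_meas : Measurable kBH := by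
    have heq : kBH = fun ω =>
        (Finset.range (m+1)).sup (fun j => if j ≤ cnt j ω then j else 0) := by
      funext ω
      rw [hk', bh_sup_filter_eq]
    rw [heq]
    apply bh_measurable_finset_sup
    intro j
    refine Measurable.ite ?_ measurable_const measurable_const
    exact measurableSet_le measurable_const (hcnt_meas j)
  have hMi_meas : ∀ i : Fin m,
      Measurable[⨆ l ∈ ({i}ᶜ : Set (Fin m)), MeasurableSpace.comap (p l) inferInstance]
        (gi i) := by
    intro i
    set Mi := ⨆ l ∈ ({i}ᶜ : Set (Fin m)), MeasurableSpace.comap (p l) inferInstance with hMi_def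
    have hpl : ∀ l : Fin m, l ≠ i → Measurable[Mi] (p l) := by
      intro l hl
      have hle : MeasurableSpace.comap (p l) inferInstance ≤ Mi := by
        rw [hMi_def]
        exact le_biSup (fun l => MeasurableSpace.comap (p l) inferInstance)
          (show l ∈ ({i}ᶜ : Set (Fin m)) by simpa using hl)
      exact fun s hs => hle _ ⟨s, hs, rfl⟩
    have hcnt'_m : ∀ j, Measurable[Mi] (cnt' i j) := by
      intro j
      have heq : cnt' i j = fun ω =>
          ∑ l : Fin m, (if (if l = i then (0:ℝ) else p l ω) ≤ t j then 1 else 0) := by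
        funext ω
        simp only [hcnt'_def]
        rw [Finset.card_filter]
      rw [heq]
      apply Finset.measurable_sum
      intro l _
      by_cases hl : l = i
      · simp only [hl, ite_true]
        exact measurable_const
      · simp only [if_neg hl]
        refine Measurable.ite ?_ measurable_const measurable_const
        exact measurableSet_le (hpl l hl) measurable_const
    have hki_m : Measurable[Mi] (ki i) := by
      have heq : ki i = fun ω =>
          (Finset.range (m+1)).sup (fun j => if j ≤ cnt' i j ω then j else 0) := by
        funext ω
        simp only [hki_def]
        rw [bh_sup_filter_eq]
      rw [heq]
      apply bh_measurable_finset_sup (s := Finset.range (m+1))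
      intro j
      refine Measurable.ite ?_ measurable_const measurable_const
      exact measurableSet_le measurable_const (hcnt'_m j)
    rw [hgi_def]
    exact hki_m.max measurable_const
  have hMi_le : ∀ i : Fin m,
      (⨆ l ∈ ({i}ᶜ : Set (Fin m)), MeasurableSpace.comap (p l) inferInstance)
        ≤ (inferInstance : MeasurableSpace Ω) := by
    intro i
    exact iSup₂_le fun l _ => (hmeas l).comap_le
  have hgi_meas : ∀ i, Measurable (gi i) := by
    intro i
    exact (hMi_meas i).mono (hMi_le i) le_rfl
  have hA : ∀ i k, hfun i k =
      Set.indicator ((gi i ⁻¹' {k}) ∩ (p i ⁻¹' Set.Iic (t k))) (fun _ => (1:ℝ)/k) := by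
    intro i k
    funext ω
    simp only [hh_def, Set.indicator_apply, Set.mem_inter_iff, Set.mem_preimage,
      Set.mem_singleton_iff, Set.mem_Iic]
  have hAB_meas : ∀ i k, MeasurableSet ((gi i ⁻¹' {k}) ∩ (p i ⁻¹' Set.Iic (t k))) := by
    intro i k
    exact ((hgi_meas i) (measurableSet_singleton k)).inter ((hmeas i) measurableSet_Iic)
  have hfun_int : ∀ i k, Integrable (hfun i k) μP := by
    intro i k
    rw [hA]
    exact (integrable_const _).indicator (hAB_meas i k)
  -- the key per-term integral computation
  have hint : ∀ i ∈ trueNulls, ∀ k ∈ Finset.Icc 1 m,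
      ∫ ω, hfun i k ω ∂μP = (μP (gi i ⁻¹' {k})).toReal * (α / m) := by
    intro i hi k hk2
    rw [Finset.mem_Icc] at hk2
    have hBC : μP ((gi i ⁻¹' {k}) ∩ (p i ⁻¹' Set.Iic (t k)))
        = μP (gi i ⁻¹' {k}) * μP (p i ⁻¹' Set.Iic (t k)) := by
      have hInd : Indep (⨆ l ∈ ({i} : Set (Fin m)), MeasurableSpace.comap (p l) inferInstance)
          (⨆ l ∈ ({i}ᶜ : Set (Fin m)), MeasurableSpace.comap (p l) inferInstance) μP :=
        indep_iSup_of_disjoint (fun l => (hmeas l).comap_le) hindep.iIndep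
          disjoint_compl_right
      refine (Indep_iff _ _ _).1 hInd.symm _ _ ((hMi_meas i) (measurableSet_singleton k)) ?_
      have hsing : (⨆ l ∈ ({i} : Set (Fin m)), MeasurableSpace.comap (p l) inferInstance)
          = MeasurableSpace.comap (p i) inferInstance := by simp
      rw [hsing]
      exact ⟨Set.Iic (t k), measurableSet_Iic, rfl⟩
    have hC_val : μP (p i ⁻¹' Set.Iic (t k)) = ENNReal.ofReal (t k) := by
      rw [← Measure.map_apply (hmeas i) measurableSet_Iic, hunif i hi,
        Measure.restrict_apply measurableSet_Iic]
      have hset : Set.Iic (t k) ∩ Set.Icc 0 1 = Set.Icc 0 (t k) := by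
        ext x
        simp only [Set.mem_inter_iff, Set.mem_Iic, Set.mem_Icc]
        constructor
        · rintro ⟨h1, h2, h3⟩; exact ⟨h2, h1⟩
        · rintro ⟨h1, h2⟩; exact ⟨h2, h1, le_trans h2 (ht_le_one hk2.2)⟩
      rw [hset, Real.volume_Icc, sub_zero]
    rw [hA, integral_indicator_const _ (hAB_meas i k), measureReal_def, hBC, hC_val,
      ENNReal.toReal_mul, ENNReal.toReal_ofReal (ht0 k)]
    have hk0 : (k:ℝ) ≠ 0 := by
      have : 1 ≤ k := hk2.1
      positivity
    simp only [smul_eq_mul, ht_def]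
    field_simp
  -- measurability and integrability of FDP
  have hthresh : Measurable (fun ω => t (kBH ω)) :=
    (measurable_from_top (f := fun n : ℕ => t n)).comp hkBH_meas
  have hRT_card_meas : Measurable (fun ω => ((R ω ∩ trueNulls).card : ℝ)) := by
    have heq : (fun ω => ((R ω ∩ trueNulls).card : ℝ))
        = fun ω => ∑ i ∈ trueNulls, (if p i ω ≤ t (kBH ω) then (1:ℝ) else 0) := by
      funext ω
      rw [show R ω ∩ trueNulls = trueNulls.filter (fun i => p i ω ≤ t (kBH ω)) by
        ext l
        rw [hR]
        simp [Finset.mem_inter, Finset.mem_filter, and_comm, ht_def]]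
      rw [Finset.card_filter]
      push_cast
      rfl
    rw [heq]
    apply Finset.measurable_sum
    intro i _
    refine Measurable.ite ?_ measurable_const measurable_const
    exact measurableSet_le (hmeas i) hthresh
  have hRcard_meas : Measurable (fun ω => (((R ω).card : ℕ) : ℝ)) := by
    have heq : (fun ω => (((R ω).card : ℕ) : ℝ))
        = fun ω => ∑ i : Fin m, (if p i ω ≤ t (kBH ω) then (1:ℝ) else 0) := by
      funext ω
      rw [hR, Finset.card_filter]
      push_cast
      rfl
    rw [heq]
    apply Finset.measurable_sum
    intro i _
    refine Measurable.ite ?_ measurable_const measurable_const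
    exact measurableSet_le (hmeas i) hthresh
  have hFDP_meas : Measurable FDP := by
    have heq : FDP = fun ω =>
        ((R ω ∩ trueNulls).card : ℝ) / max (((R ω).card : ℕ) : ℝ) 1 := funext hFDP
    rw [heq]
    exact hRT_card_meas.div (hRcard_meas.max measurable_const)
  have hFDP_int : Integrable FDP μP := by
    refine Integrable.mono' (integrable_const ((m : ℕ) : ℝ))
      hFDP_meas.aestronglyMeasurable (Filter.Eventually.of_forall ?_)
    intro ω
    rw [hFDP, Real.norm_eq_abs]
    have h1 : (0:ℝ) ≤ ((R ω ∩ trueNulls).card : ℝ) := Nat.cast_nonneg _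
    have hD : (1:ℝ) ≤ max (((R ω).card : ℕ) : ℝ) 1 := le_max_right _ _
    rw [abs_of_nonneg (div_nonneg h1 (le_trans zero_le_one hD))]
    calc ((R ω ∩ trueNulls).card : ℝ) / max (((R ω).card : ℕ) : ℝ) 1
        ≤ ((R ω ∩ trueNulls).card : ℝ) := div_le_self h1 hD
      _ ≤ ((m : ℕ) : ℝ) := by
          have hle : (R ω ∩ trueNulls).card ≤ m := by
            calc (R ω ∩ trueNulls).card ≤ (Finset.univ : Finset (Fin m)).card :=
              Finset.card_le_card (Finset.subset_univ _)
            _ = m := by simp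
          exact_mod_cast hle
  have hG_int : Integrable G μP := by
    have : Integrable (fun ω => ∑ i ∈ trueNulls, ∑ k ∈ Finset.Icc 1 m, hfun i k ω) μP :=
      integrable_finset_sum _ (fun i _ => integrable_finset_sum _ (fun k _ => hfun_int i k))
    exact this
  -- summing up
  have hsum_le : ∀ i ∈ trueNulls,
      ∑ k ∈ Finset.Icc 1 m, (μP (gi i ⁻¹' {k})).toReal * (α / m) ≤ α / m := by
    intro i hi
    rw [← Finset.sum_mul]
    have hle1 : ∑ k ∈ Finset.Icc 1 m, (μP (gi i ⁻¹' {k})).toReal ≤ 1 := by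
      have hd : Set.PairwiseDisjoint (↑(Finset.Icc 1 m) : Set ℕ)
          (fun k => gi i ⁻¹' {k}) := by
        intro a _ b _ hab
        refine Set.disjoint_left.2 ?_
        intro x hxa hxb
        exact hab (by rw [← hxa, ← hxb])
      have hmB : ∀ k ∈ Finset.Icc 1 m, MeasurableSet (gi i ⁻¹' {k}) :=
        fun k _ => (hgi_meas i) (measurableSet_singleton k)
      have hsum_eq : ∑ k ∈ Finset.Icc 1 m, μP (gi i ⁻¹' {k})
          = μP (⋃ k ∈ Finset.Icc 1 m, gi i ⁻¹' {k}) :=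
        (measure_biUnion_finset hd hmB).symm
      have hle : ∑ k ∈ Finset.Icc 1 m, μP (gi i ⁻¹' {k}) ≤ 1 := by
        rw [hsum_eq]
        calc μP (⋃ k ∈ Finset.Icc 1 m, gi i ⁻¹' {k}) ≤ μP Set.univ :=
          measure_mono (Set.subset_univ _)
        _ = 1 := measure_univ
      calc ∑ k ∈ Finset.Icc 1 m, (μP (gi i ⁻¹' {k})).toReal
          = (∑ k ∈ Finset.Icc 1 m, μP (gi i ⁻¹' {k})).toReal :=
            (ENNReal.toReal_sum (fun k _ => measure_ne_top μP _)).symm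
        _ ≤ ENNReal.toReal 1 := ENNReal.toReal_mono ENNReal.one_ne_top hle
        _ = 1 := ENNReal.toReal_one
    calc (∑ k ∈ Finset.Icc 1 m, (μP (gi i ⁻¹' {k})).toReal) * (α / m)
        ≤ 1 * (α / m) := mul_le_mul_of_nonneg_right hle1 (by positivity)
      _ = α / m := one_mul _
  constructor
  · calc ∫ ω, FDP ω ∂μP ≤ ∫ ω, G ω ∂μP := integral_mono hFDP_int hG_int hpt
      _ = ∑ i ∈ trueNulls, ∑ k ∈ Finset.Icc 1 m, ∫ ω, hfun i k ω ∂μP := by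
          rw [show (fun ω => G ω) = fun ω =>
              ∑ i ∈ trueNulls, ∑ k ∈ Finset.Icc 1 m, hfun i k ω from rfl]
          rw [integral_finset_sum _
            (fun i _ => integrable_finset_sum _ (fun k _ => hfun_int i k))]
          exact Finset.sum_congr rfl fun i _ =>
            integral_finset_sum _ (fun k _ => hfun_int i k)
      _ ≤ ∑ _i ∈ trueNulls, α / m := by
          apply Finset.sum_le_sum
          intro i hi
          rw [Finset.sum_congr rfl (fun k hk2 => hint i hi k hk2)]
          exact hsum_le i hi
      _ = (m0 : ℝ) * (α / m) := by
          rw [Finset.sum_const, hcard, nsmul_eq_mul]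
      _ = (m0 : ℝ) / m * α := by ring
  · have h1 : (m0 : ℝ) / m ≤ 1 := (div_le_one hm').2 (by exact_mod_cast hm0)
    calc (m0 : ℝ) / m * α ≤ 1 * α := mul_le_mul_of_nonneg_right h1 hα0
      _ = α := one_mul _
end

section
/- Sparse recovery uniqueness via spark: if every set of $2k$ columns of the matrix $A \in \mathbb{R}^{m \times p}$ is linearly independent, then for any $y$ there is at most one vector $x$ with at most $k$ nonzero entries satisfying $Ax = y$. -/
open Matrix in
/-- Sparse recovery uniqueness via spark: if every `2k` columns of `A` are linearly
independent, then a `k`-sparse solution of `A x = y` is unique. -/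
theorem sparse_recovery_unique_of_spark (m p k : ℕ) (hkp : 2 * k ≤ p)
    (A : Matrix (Fin m) (Fin p) ℝ)
    (hA : ∀ S : Finset (Fin p), S.card = 2 * k →
      LinearIndependent ℝ (fun j : S => fun i : Fin m => A i (j : Fin p))) :
    ∀ (y : Fin m → ℝ) (x₁ x₂ : Fin p → ℝ),
      A *ᵥ x₁ = y → A *ᵥ x₂ = y →
      (Finset.univ.filter (fun j => x₁ j ≠ 0)).card ≤ k →
      (Finset.univ.filter (fun j => x₂ j ≠ 0)).card ≤ k →
      x₁ = x₂ := by
  intro y x₁ x₂ h1 h2 hs1 hs2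
  set z : Fin p → ℝ := x₁ - x₂ with hz
  have hAz : A *ᵥ z = 0 := by
    rw [hz, Matrix.mulVec_sub, h1, h2, sub_self]
  have hsupp : (Finset.univ.filter (fun j => z j ≠ 0)) ⊆
      (Finset.univ.filter (fun j => x₁ j ≠ 0)) ∪ (Finset.univ.filter (fun j => x₂ j ≠ 0)) := by
    intro j hj
    simp only [Finset.mem_filter, Finset.mem_union, Finset.mem_univ, true_and] at *
    by_contra h
    push_neg at h
    apply hj
    show x₁ j - x₂ j = 0
    rw [h.1, h.2, sub_zero]
  have hcard : (Finset.univ.filter (fun j => z j ≠ 0)).card ≤ 2 * k := by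
    calc (Finset.univ.filter (fun j => z j ≠ 0)).card
        ≤ ((Finset.univ.filter (fun j => x₁ j ≠ 0)) ∪
            (Finset.univ.filter (fun j => x₂ j ≠ 0))).card := Finset.card_le_card hsupp
      _ ≤ _ + _ := Finset.card_union_le _ _
      _ ≤ 2 * k := by omega
  obtain ⟨S, hSsub, hScard⟩ := Finset.exists_superset_card_eq hcard (by simpa using hkp)
  have hli := hA S hScard
  have hzS : ∀ j ∈ S, z j = 0 := by
    have := Fintype.linearIndependent_iff.mp hli (fun j => z j) ?_
    · intro j hj; exact this ⟨j, hj⟩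
    · funext i
      have : ∑ j : S, z j * A i (j : Fin p) = 0 := by
        rw [Finset.sum_coe_sort S (fun j => z j * A i j)]
        have hext : ∑ j ∈ S, z j * A i j = ∑ j, z j * A i j := by
          apply Finset.sum_subset (Finset.subset_univ S)
          intro j _ hj
          have : z j = 0 := by
            by_contra hne
            exact hj (hSsub (by simp [hne]))
          simp [this]
        rw [hext]
        have := congrFun hAz i
        simpa [Matrix.mulVec, dotProduct, mul_comm] using this
      simpa using this
  have hz0 : z = 0 := by
    funext j
    simp only [Pi.zero_apply]
    by_cases hj : j ∈ S
    · exact hzS j hj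
    · by_contra hne
      exact hj (hSsub (by simp [hne]))
  have : x₁ - x₂ = 0 := hz0
  exact sub_eq_zero.mp this
end
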